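/- arXiv:1110.3603 — 2 statements merged into one kernel-verified Lean document; each statement's English description precedes it below -/
import Mathlib

section
/- For d >= 2, the function x |-> 1/|w(x)|, where w(x) = -i x_1 + ||x'||^2, is Lebesgue integrable on the unit ball of R^d. In particular 1/|w| is integrable in a neighborhood of 0. -/
open MeasureTheory Set Real

noncomputable def w {n : ℕ} (x : ℝ × EuclideanSpace ℝ (Fin n)) : ℂ :=
  -Complex.I * (x.1 : ℂ) + (‖x.2‖ : ℂ) ^ 2

private lemma stmt1_L1 {r : ℝ} (hr : -1 < r) :
    IntegrableOn (fun t : ℝ => |t| ^ r) (Set.Ioo (-1) 1) volume := by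
  have h01 : IntegrableOn (fun t : ℝ => |t| ^ r) (Set.Ioc 0 1) volume := by
    refine ((intervalIntegral.intervalIntegrable_rpow' (a := 0) (b := 1) hr).1).congr_fun
      (fun x hx => by rw [abs_of_pos hx.1]) measurableSet_Ioc
  have hI : IntervalIntegrable (fun t : ℝ => |t| ^ r) volume 0 1 :=
    ⟨h01, by simp [Set.Ioc_eq_empty, integrableOn_empty]⟩
  have h2 := (IntervalIntegrable.iff_comp_neg (f := fun t : ℝ => |t| ^ r) (a := 0) (b := 1) enorm_ne_top).mp hI
  simp only [abs_neg, neg_zero] at h2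
  refine (h2.2.union h01).mono_set ?_
  intro x hx
  rcases le_or_gt x 0 with h | h
  · exact Or.inl ⟨hx.1, h⟩
  · exact Or.inr ⟨h, hx.2.le⟩

private lemma stmt1_coordLe {n : ℕ} (y : EuclideanSpace ℝ (Fin n)) (i : Fin n) : |y i| ≤ ‖y‖ := by
  rw [EuclideanSpace.norm_eq]
  have h : |y i| ^ 2 ≤ ∑ j, ‖y j‖ ^ 2 := by
    refine Finset.single_le_sum (f := fun j => ‖y j‖ ^ 2) (fun j _ => by positivity)
      (Finset.mem_univ i) |>.trans_eq' ?_
    simp [Real.norm_eq_abs]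
  calc |y i| = Real.sqrt (|y i| ^ 2) := by rw [Real.sqrt_sq (abs_nonneg _)]
    _ ≤ _ := Real.sqrt_le_sqrt h

private noncomputable def stmt1_f : ℝ → ℝ :=
  (Set.Ioo (-1:ℝ) 1).indicator (fun t => max 1 (|t| ^ (-(1/2):ℝ)))

private lemma stmt1_hf_int : Integrable stmt1_f volume := by
  rw [stmt1_f, integrable_indicator_iff measurableSet_Ioo]
  exact (integrableOn_const (C := (1:ℝ)) (s := Set.Ioo (-1:ℝ) 1) (μ := volume) measure_Ioo_lt_top.ne).sup (stmt1_L1 (by norm_num))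

private lemma stmt1_hG_int {n : ℕ} :
    Integrable (fun y : EuclideanSpace ℝ (Fin n) => ∏ i, stmt1_f (y i)) volume := by
  have hpi : Integrable (fun z : Fin n → ℝ => ∏ i, stmt1_f (z i)) volume :=
    Integrable.fintype_prod (𝕜 := ℝ) (fun _ => stmt1_hf_int)
  have h := ((EuclideanSpace.volume_preserving_symm_measurableEquiv_toLp (Fin n)).symm).integrable_comp_emb
    (MeasurableEquiv.measurableEmbedding _)
    (g := fun y : EuclideanSpace ℝ (Fin n) => ∏ i, stmt1_f (y i))
  rw [← h]
  exact hpi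

private lemma stmt1_prodf_ge {n : ℕ} (y : EuclideanSpace ℝ (Fin n)) (hy : ‖y‖ < 1) (i0 : Fin n) :
    |y i0| ^ (-(1/2):ℝ) ≤ ∏ i, stmt1_f (y i) := by
  have hcoord : ∀ i, y i ∈ Set.Ioo (-1:ℝ) 1 := fun i =>
    abs_lt.mp ((stmt1_coordLe y i).trans_lt hy)
  have hfi : ∀ i, stmt1_f (y i) = max 1 (|y i| ^ (-(1/2):ℝ)) := fun i =>
    Set.indicator_of_mem (hcoord i) _
  calc |y i0| ^ (-(1/2):ℝ)
      = ∏ i, (if i = i0 then |y i0| ^ (-(1/2):ℝ) else 1) := by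
        rw [Finset.prod_ite_eq' Finset.univ i0 (fun _ => |y i0| ^ (-(1/2):ℝ))]
        simp
    _ ≤ ∏ i, stmt1_f (y i) := by
        refine Finset.prod_le_prod (fun i _ => ?_) (fun i _ => ?_)
        · split <;> positivity
        · rw [hfi i]
          split
          · subst ‹i = i0›; exact le_max_right _ _
          · exact le_max_left _ _

private lemma stmt1_key {a b A : ℝ} (ha : 0 < a) (hb : 0 < b) (h1 : a ≤ A) (h2 : b ^ 2 ≤ A) :
    1 / A ≤ a ^ (-(3/4) : ℝ) * b ^ (-(1/2) : ℝ) := by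
  have hA : 0 < A := lt_of_lt_of_le ha h1
  have e1 : a ^ ((3:ℝ)/4) ≤ A ^ ((3:ℝ)/4) := Real.rpow_le_rpow ha.le h1 (by norm_num)
  have e2 : b ^ ((1:ℝ)/2) ≤ A ^ ((1:ℝ)/4) := by
    have : b ^ ((1:ℝ)/2) = (b ^ 2) ^ ((1:ℝ)/4) := by
      rw [← Real.rpow_natCast b 2, ← Real.rpow_mul hb.le]
      norm_num
    rw [this]
    exact Real.rpow_le_rpow (by positivity) h2 (by norm_num)
  have hab : a ^ ((3:ℝ)/4) * b ^ ((1:ℝ)/2) ≤ A := by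
    calc a ^ ((3:ℝ)/4) * b ^ ((1:ℝ)/2) ≤ A ^ ((3:ℝ)/4) * A ^ ((1:ℝ)/4) :=
          mul_le_mul e1 e2 (by positivity) (by positivity)
      _ = A := by rw [← Real.rpow_add hA]; norm_num
  have hpos : 0 < a ^ ((3:ℝ)/4) * b ^ ((1:ℝ)/2) := by positivity
  calc 1 / A ≤ 1 / (a ^ ((3:ℝ)/4) * b ^ ((1:ℝ)/2)) := one_div_le_one_div_of_le hpos hab
    _ = a ^ (-(3/4) : ℝ) * b ^ (-(1/2) : ℝ) := by
        rw [Real.rpow_neg ha.le, Real.rpow_neg hb.le, one_div, mul_inv]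

private lemma stmt1_hyperplane_null {n : ℕ} (i : Fin n) :
    volume {y : EuclideanSpace ℝ (Fin n) | y i = 0} = 0 := by
  have h : {y : EuclideanSpace ℝ (Fin n) | y i = 0}
      = (LinearMap.ker (EuclideanSpace.projₗ i (𝕜 := ℝ)) : Submodule ℝ _) := by
    ext y; simp [LinearMap.mem_ker, EuclideanSpace.projₗ]
  rw [h]
  refine Measure.addHaar_submodule _ _ ?_
  intro htop
  have h1 : (EuclideanSpace.single i (1:ℝ)) ∈ LinearMap.ker (EuclideanSpace.projₗ i (𝕜 := ℝ)) := by
    rw [htop]; trivial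
  simp [LinearMap.mem_ker, EuclideanSpace.projₗ] at h1

/-- For `d ≥ 2`, the function `x ↦ 1/|w x|`, `w x = -i x₁ + ‖x'‖²`, is Lebesgue
integrable on the unit ball of `ℝ^d = ℝ × ℝ^{d-1}`. -/
theorem stmt1 {n : ℕ} (hn : 1 ≤ n) :
    MeasureTheory.IntegrableOn
      (fun x : ℝ × EuclideanSpace ℝ (Fin n) => 1 / ‖w x‖)
      (Metric.ball 0 1) MeasureTheory.volume := by
  set i0 : Fin n := ⟨0, hn⟩
  set F : ℝ → ℝ := (Set.Ioo (-1:ℝ) 1).indicator (fun t => |t| ^ (-(3/4):ℝ)) with hF_def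
  have hF_int : Integrable F volume := by
    rw [hF_def, integrable_indicator_iff measurableSet_Ioo]
    exact stmt1_L1 (by norm_num)
  have hB_int : Integrable
      (fun x : ℝ × EuclideanSpace ℝ (Fin n) => F x.1 * ∏ i, stmt1_f (x.2 i)) volume := by
    rw [MeasureTheory.Measure.volume_eq_prod]
    exact hF_int.mul_prod stmt1_hG_int
  -- null sets
  have hN1 : ∀ᵐ x : ℝ × EuclideanSpace ℝ (Fin n) ∂volume, x.1 ≠ 0 := by
    rw [ae_iff]
    have h : {x : ℝ × EuclideanSpace ℝ (Fin n) | ¬ x.1 ≠ 0}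
        = ({(0:ℝ)} : Set ℝ) ×ˢ (Set.univ : Set (EuclideanSpace ℝ (Fin n))) := by
      ext x
      simp only [Set.mem_setOf_eq, not_not, Set.mem_prod, Set.mem_singleton_iff, Set.mem_univ,
        and_true]
    rw [h, MeasureTheory.Measure.volume_eq_prod, Measure.prod_prod]
    simp
  have hN2 : ∀ᵐ x : ℝ × EuclideanSpace ℝ (Fin n) ∂volume, x.2 i0 ≠ 0 := by
    rw [ae_iff]
    have h : {x : ℝ × EuclideanSpace ℝ (Fin n) | ¬ x.2 i0 ≠ 0}
        = (Set.univ : Set ℝ) ×ˢ {y : EuclideanSpace ℝ (Fin n) | y i0 = 0} := by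
      ext x
      simp only [Set.mem_setOf_eq, not_not, Set.mem_prod, Set.mem_univ, true_and]
    rw [h, MeasureTheory.Measure.volume_eq_prod, Measure.prod_prod, stmt1_hyperplane_null i0, mul_zero]
  refine Integrable.mono' hB_int.integrableOn ?_ ?_
  · have hw : Continuous (fun x : ℝ × EuclideanSpace ℝ (Fin n) => w x) := by
      unfold w; fun_prop
    have hm : Measurable (fun x : ℝ × EuclideanSpace ℝ (Fin n) => 1 / ‖w x‖) := by
      simp only [one_div]
      exact (continuous_norm.comp hw).measurable.inv
    exact hm.aestronglyMeasurable
  · filter_upwards [ae_restrict_mem measurableSet_ball, ae_restrict_of_ae hN1,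
      ae_restrict_of_ae hN2] with x hx h1 h2
    have hxn : ‖x‖ < 1 := mem_ball_zero_iff.mp hx
    have hx1 : |x.1| < 1 := lt_of_le_of_lt (norm_fst_le x) hxn
    have hx2 : ‖x.2‖ < 1 := lt_of_le_of_lt (norm_snd_le x) hxn
    set A : ℝ := ‖w x‖ with hA_def
    have hwim : (w x).im = -x.1 := by simp [w, ← Complex.ofReal_pow]
    have hwre : (w x).re = ‖x.2‖ ^ 2 := by simp [w, ← Complex.ofReal_pow]
    have ha : |x.1| ≤ A := by
      have := Complex.abs_im_le_norm (w x)
      rwa [hwim, abs_neg] at this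
    have hb : |x.2 i0| ^ 2 ≤ A := by
      have h3 : |x.2 i0| ^ 2 ≤ ‖x.2‖ ^ 2 :=
        pow_le_pow_left₀ (abs_nonneg _) (stmt1_coordLe x.2 i0) 2
      have h4 := Complex.abs_re_le_norm (w x)
      rw [hwre, abs_of_nonneg (by positivity)] at h4
      exact h3.trans h4
    have hA0 : 0 < A := lt_of_lt_of_le (abs_pos.mpr h1) ha
    have hkey : 1 / A ≤ |x.1| ^ (-(3/4) : ℝ) * |x.2 i0| ^ (-(1/2) : ℝ) :=
      stmt1_key (abs_pos.mpr h1) (abs_pos.mpr h2) ha hb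
    have hFx : F x.1 = |x.1| ^ (-(3/4):ℝ) :=
      Set.indicator_of_mem (Set.mem_Ioo.mpr (abs_lt.mp hx1)) _
    calc ‖1 / A‖ = 1 / A := by
          rw [Real.norm_eq_abs, abs_of_nonneg (by positivity)]
      _ ≤ |x.1| ^ (-(3/4) : ℝ) * |x.2 i0| ^ (-(1/2) : ℝ) := hkey
      _ ≤ F x.1 * ∏ i, stmt1_f (x.2 i) := by
          rw [hFx]
          exact mul_le_mul_of_nonneg_left (stmt1_prodf_ge x.2 hx2 i0) (by positivity)
end

section
/- Let lambda be twice continuously differentiable on a neighborhood of 0 in R^d with lambda(0)=1, gradient of lambda at 0 equal to i*m*e_1 for some m > 0 (e_1 the first basis vector), and Hessian at 0 equal to -Sigma with Sigma positive definite. Set v_0(t) = 1 - lambda(t) and w(t) = -i t_1 + ||t'||^2. Then there exist R > 0 and positive constants alpha, beta such that alpha |w(t)| <= |v_0(t)| <= beta |w(t)| for all t in B_R. -/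
open Topology
-- coercivity lemma
lemma coercive_aux {E : Type*} [NormedAddCommGroup E] [NormedSpace ℝ E]
    [FiniteDimensional ℝ E] [Nontrivial E] (B : E →L[ℝ] E →L[ℝ] ℝ)
    (hpos : ∀ t : E, t ≠ 0 → 0 < B t t) :
    ∃ c > (0:ℝ), ∀ t : E, c * ‖t‖^2 ≤ B t t := by
  have hcont : Continuous fun t : E => B t t :=
    B.isBoundedBilinearMap.continuous.comp (continuous_id.prodMk continuous_id)
  have hsph : (Metric.sphere (0:E) 1).Nonempty :=
    NormedSpace.sphere_nonempty.2 zero_le_one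
  obtain ⟨x₀, hx₀, hmin⟩ :=
    (isCompact_sphere (0:E) 1).exists_isMinOn hsph hcont.continuousOn
  have hx₀n : ‖x₀‖ = 1 := mem_sphere_zero_iff_norm.1 hx₀
  have hx₀ne : x₀ ≠ 0 := by
    intro h; rw [h, norm_zero] at hx₀n; norm_num at hx₀n
  refine ⟨B x₀ x₀, hpos x₀ hx₀ne, fun t => ?_⟩
  rcases eq_or_ne t 0 with rfl | ht
  · simp
  · have hnt : (0:ℝ) < ‖t‖ := norm_pos_iff.2 ht
    set u := ‖t‖⁻¹ • t with hu_def
    have hu : u ∈ Metric.sphere (0:E) 1 := by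
      rw [mem_sphere_zero_iff_norm, hu_def, norm_smul, norm_inv, norm_norm,
        inv_mul_cancel₀ hnt.ne']
    have h1 : B x₀ x₀ ≤ B u u := hmin hu
    have h2 : B u u = ‖t‖⁻¹ * (‖t‖⁻¹ * B t t) := by
      rw [hu_def, map_smul]
      simp [ContinuousLinearMap.smul_apply, map_smul, smul_eq_mul]
    have h3 : ‖t‖⁻¹ * ‖t‖ = 1 := inv_mul_cancel₀ hnt.ne'
    have h4 := mul_le_mul_of_nonneg_right h1 (sq_nonneg ‖t‖)
    rw [h2] at h4
    have h5 : ‖t‖⁻¹ * (‖t‖⁻¹ * B t t) * ‖t‖^2 = B t t := by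
      field_simp
    linarith


lemma taylor2_aux {E F : Type*} [NormedAddCommGroup E] [NormedSpace ℝ E]
    [NormedAddCommGroup F] [NormedSpace ℝ F]
    (f : E → F) (hf : ContDiffAt ℝ 2 f 0)
    (hQsymm : ∀ s t : E, fderiv ℝ (fderiv ℝ f) 0 s t = fderiv ℝ (fderiv ℝ f) 0 t s)
    {ε : ℝ} (hε : 0 < ε) :
    ∃ δ > (0:ℝ), ∀ t : E, ‖t‖ < δ →
      ‖f t - f 0 - fderiv ℝ f 0 t - (1/2 : ℝ) • fderiv ℝ (fderiv ℝ f) 0 t t‖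
        ≤ ε * ‖t‖^2 := by
  set L := fderiv ℝ f 0 with hL
  set Q := fderiv ℝ (fderiv ℝ f) 0 with hQ
  -- differentiability near 0
  have hev : ∀ᶠ y in 𝓝 (0:E), DifferentiableAt ℝ f y := by
    filter_upwards [hf.eventually (by simp)] with y hy
    exact hy.differentiableAt two_ne_zero
  obtain ⟨δ₁, hδ₁, hball₁⟩ := Metric.eventually_nhds_iff_ball.1 hev
  -- second derivative estimate
  have hQder : HasFDerivAt (fderiv ℝ f) Q 0 :=
    ((hf.fderiv_right (m := 1) one_add_one_eq_two.le).differentiableAt one_ne_zero).hasFDerivAt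
  have hlo := hasFDerivAt_iff_isLittleO_nhds_zero.1 hQder
  have hlo2 := Asymptotics.isLittleO_iff.1 hlo hε
  simp only [zero_add] at hlo2
  obtain ⟨δ₂, hδ₂, hb₂⟩ := Metric.eventually_nhds_iff_ball.1 hlo2
  refine ⟨min δ₁ δ₂, lt_min hδ₁ hδ₂, fun t ht => ?_⟩
  set g : E → F := fun z => f z - L z - (1/2 : ℝ) • Q z z with hg
  set g' : E → (E →L[ℝ] F) := fun y => fderiv ℝ f y - L - Q y with hg'
  have hseg : segment ℝ (0:E) t ⊆ Metric.closedBall 0 ‖t‖ := by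
    apply (convex_closedBall (0:E) ‖t‖).segment_subset
    · simp
    · simp [Metric.mem_closedBall]
  have hmem : ∀ y ∈ segment ℝ (0:E) t, ‖y‖ ≤ ‖t‖ := fun y hy => by
    simpa [Metric.mem_closedBall] using hseg hy
  have hkey : ∀ y ∈ segment ℝ (0:E) t,
      HasFDerivWithinAt g (g' y) (segment ℝ (0:E) t) y := by
    intro y hy
    have hy1 : y ∈ Metric.ball (0:E) δ₁ := by
      rw [Metric.mem_ball, dist_zero_right]
      exact lt_of_le_of_lt (hmem y hy) (lt_of_lt_of_le ht (min_le_left _ _))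
    have h1 : HasFDerivAt f (fderiv ℝ f y) y := (hball₁ y hy1).hasFDerivAt
    have h2 : HasFDerivAt (fun z : E => L z) L y := L.hasFDerivAt
    have hdiag : HasFDerivAt (fun z : E => (z, z))
        ((ContinuousLinearMap.id ℝ E).prod (ContinuousLinearMap.id ℝ E)) y :=
      (hasFDerivAt_id y).prodMk (hasFDerivAt_id y)
    have h3' : HasFDerivAt ((fun p : E × E => Q p.1 p.2) ∘ (fun z : E => (z, z)))
        ((Q.isBoundedBilinearMap.deriv (y, y)).comp
          ((ContinuousLinearMap.id ℝ E).prod (ContinuousLinearMap.id ℝ E))) y :=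
      HasFDerivAt.comp y (Q.isBoundedBilinearMap.hasFDerivAt (y, y)) hdiag
    have h3 : HasFDerivAt (fun z : E => Q z z)
        ((Q.isBoundedBilinearMap.deriv (y, y)).comp
          ((ContinuousLinearMap.id ℝ E).prod (ContinuousLinearMap.id ℝ E))) y := h3'
    have h4 := h3.const_smul (1/2 : ℝ)
    have hDeq : (1/2 : ℝ) • ((Q.isBoundedBilinearMap.deriv (y, y)).comp
        ((ContinuousLinearMap.id ℝ E).prod (ContinuousLinearMap.id ℝ E))) = Q y := by
      ext v
      simp only [ContinuousLinearMap.smul_apply, ContinuousLinearMap.coe_comp',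
        Function.comp_apply, ContinuousLinearMap.prod_apply, ContinuousLinearMap.coe_id',
        id_eq, Q.isBoundedBilinearMap.deriv_apply]
      rw [hQsymm v y, ← two_smul ℝ (Q y v), smul_smul]
      norm_num
    rw [hDeq] at h4
    exact ((h1.sub h2).sub h4).hasFDerivWithinAt
  have hbound : ∀ y ∈ segment ℝ (0:E) t, ‖g' y‖ ≤ ε * ‖t‖ := by
    intro y hy
    have hy2 : y ∈ Metric.ball (0:E) δ₂ := by
      rw [Metric.mem_ball, dist_zero_right]
      exact lt_of_le_of_lt (hmem y hy) (lt_of_lt_of_le ht (min_le_right _ _))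
    have := hb₂ y hy2
    calc ‖g' y‖ ≤ ε * ‖y‖ := this
      _ ≤ ε * ‖t‖ := by
        exact mul_le_mul_of_nonneg_left (hmem y hy) hε.le
  have hmvt := (convex_segment (0:E) t).norm_image_sub_le_of_norm_hasFDerivWithin_le
    hkey hbound (left_mem_segment ℝ 0 t) (right_mem_segment ℝ 0 t)
  have hg0 : g 0 = f 0 := by simp [hg]
  have heq : f t - f 0 - L t - (1/2 : ℝ) • Q t t = g t - g 0 := by
    rw [hg0]; simp only [hg]; abel
  rw [heq]
  calc ‖g t - g 0‖ ≤ ε * ‖t‖ * ‖t - 0‖ := hmvt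
    _ = ε * ‖t‖^2 := by rw [sub_zero]; ring

/-- If `λ` is C² near `0` with `λ 0 = 1`, gradient `i m e₁` (`m > 0`) and Hessian `-Σ`
with `Σ` positive definite, then with `v₀ = 1 - λ` and `w t = -i t₁ + ‖t'‖²`,
there are `R, α, β > 0` with `α |w t| ≤ |v₀ t| ≤ β |w t|` on `B_R`. -/
theorem stmt3 {n : ℕ} (hn : 1 ≤ n) (lam : ℝ × EuclideanSpace ℝ (Fin n) → ℂ)
    (m : ℝ) (hm : 0 < m)
    (hC2 : ContDiffAt ℝ 2 lam 0)
    (h0 : lam 0 = 1)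
    (hgrad : ∀ t : ℝ × EuclideanSpace ℝ (Fin n),
      fderiv ℝ lam 0 t = Complex.I * (m : ℂ) * (t.1 : ℂ))
    (B : (ℝ × EuclideanSpace ℝ (Fin n)) →L[ℝ] (ℝ × EuclideanSpace ℝ (Fin n)) →L[ℝ] ℝ)
    (hsymm : ∀ s t, B s t = B t s)
    (hpos : ∀ t : ℝ × EuclideanSpace ℝ (Fin n), t ≠ 0 → 0 < B t t)
    (hhess : ∀ s t : ℝ × EuclideanSpace ℝ (Fin n),
      fderiv ℝ (fderiv ℝ lam) 0 s t = (-(B s t) : ℝ)) :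
    ∃ R > (0 : ℝ), ∃ α > (0 : ℝ), ∃ β > (0 : ℝ),
      ∀ t ∈ Metric.ball (0 : ℝ × EuclideanSpace ℝ (Fin n)) R,
        α * ‖w t‖ ≤ ‖1 - lam t‖ ∧
        ‖1 - lam t‖ ≤ β * ‖w t‖ := by
  obtain ⟨c, hc, hcoer⟩ := coercive_aux B hpos
  have hsymQ : ∀ s t : ℝ × EuclideanSpace ℝ (Fin n),
      fderiv ℝ (fderiv ℝ lam) 0 s t = fderiv ℝ (fderiv ℝ lam) 0 t s := by
    intro s t; rw [hhess, hhess, hsymm]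
  have hε : (0:ℝ) < c/8 := by linarith
  obtain ⟨δ, hδ, htay⟩ := taylor2_aux lam hC2 hsymQ hε
  have hα0 : (0:ℝ) < min (m/2) (c/8) := lt_min (by linarith) hε
  refine ⟨min δ 1, lt_min hδ one_pos, min (m/2) (c/8), hα0,
    2*(m + ‖B‖/2 + c/8 + 1), by positivity, fun t ht => ?_⟩
  rw [Metric.mem_ball, dist_zero_right] at ht
  have htδ : ‖t‖ < δ := lt_of_lt_of_le ht (min_le_left _ _)
  have ht1 : ‖t‖ < 1 := lt_of_lt_of_le ht (min_le_right _ _)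
  set a := |t.1| with ha_def
  set b := ‖t.2‖ with hb_def
  have ha0 : 0 ≤ a := abs_nonneg _
  have hb0 : 0 ≤ b := norm_nonneg _
  have hnorm : ‖t‖ = max a b := by
    rw [Prod.norm_def, Real.norm_eq_abs]
  have hat : a ≤ ‖t‖ := by rw [hnorm]; exact le_max_left _ _
  have hbt : b ≤ ‖t‖ := by rw [hnorm]; exact le_max_right _ _
  have hbt2 : b^2 ≤ ‖t‖^2 := by nlinarith
  have hts : ‖t‖^2 ≤ a + b^2 := by
    rcases le_total a b with h | h
    · rw [hnorm, max_eq_right h]; nlinarith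
    · rw [hnorm, max_eq_left h]; nlinarith
  -- facts about w
  have hwim : (w t).im = -t.1 := by
    simp [w, ← Complex.ofReal_pow]
  have hwre : (w t).re = b^2 := by
    simp [w, ← Complex.ofReal_pow, hb_def]
  have hw_up : ‖w t‖ ≤ a + b^2 := by
    calc ‖w t‖ ≤ ‖-Complex.I * (t.1 : ℂ)‖ + ‖((b : ℝ) : ℂ)^2‖ := norm_add_le _ _
      _ = a + b^2 := by
        rw [norm_mul, norm_neg, Complex.norm_I, one_mul, Complex.norm_real,
          norm_pow, Complex.norm_real, Real.norm_eq_abs, Real.norm_eq_abs,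
          abs_of_nonneg hb0]
  have hw_lo1 : a ≤ ‖w t‖ := by
    calc a = |(w t).im| := by rw [hwim, abs_neg]
      _ ≤ ‖w t‖ := Complex.abs_im_le_norm _
  have hw_lo2 : b^2 ≤ ‖w t‖ := by
    calc b^2 = (w t).re := hwre.symm
      _ ≤ |(w t).re| := le_abs_self _
      _ ≤ ‖w t‖ := Complex.abs_re_le_norm _
  have hw0 : 0 ≤ ‖w t‖ := norm_nonneg _
  -- Taylor estimate
  have htayt := htay t htδ
  rw [h0, hgrad t, hhess t t] at htayt
  set M : ℂ := ((B t t / 2 : ℝ) : ℂ) - Complex.I * ((m : ℂ) * (t.1 : ℂ)) with hM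
  set r : ℂ := lam t - 1 - Complex.I * (m : ℂ) * (t.1 : ℂ)
      - (1/2 : ℝ) • ((-(B t t) : ℝ) : ℂ) with hr
  have hrb : ‖r‖ ≤ c/8 * ‖t‖^2 := htayt
  have hdecomp : 1 - lam t = M - r := by
    rw [hM, hr, Complex.real_smul]
    push_cast
    ring
  have hMre : M.re = B t t / 2 := by simp [hM]
  have hMim : M.im = -(m * t.1) := by simp [hM]
  have hBtt_lo : c * ‖t‖^2 ≤ B t t := hcoer t
  have hBtt0 : (0:ℝ) ≤ B t t := le_trans (by positivity) hBtt_lo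
  have hBtt_up : B t t ≤ ‖B‖ * ‖t‖^2 := by
    calc B t t ≤ |B t t| := le_abs_self _
      _ = ‖B t t‖ := (Real.norm_eq_abs _).symm
      _ ≤ ‖B t‖ * ‖t‖ := (B t).le_opNorm t
      _ ≤ (‖B‖ * ‖t‖) * ‖t‖ := mul_le_mul_of_nonneg_right (B.le_opNorm t) (norm_nonneg t)
      _ = ‖B‖ * ‖t‖^2 := by ring
  have hM_lo1 : B t t / 2 ≤ ‖M‖ := by
    calc B t t / 2 = M.re := hMre.symm
      _ ≤ |M.re| := le_abs_self _
      _ ≤ ‖M‖ := Complex.abs_re_le_norm M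
  have hM_lo2 : m * a ≤ ‖M‖ := by
    calc m * a = |M.im| := by rw [hMim, abs_neg, abs_mul, abs_of_pos hm]
      _ ≤ ‖M‖ := Complex.abs_im_le_norm M
  have hM_up : ‖M‖ ≤ B t t / 2 + m * a := by
    calc ‖M‖ ≤ ‖((B t t / 2 : ℝ) : ℂ)‖ + ‖Complex.I * ((m : ℂ) * (t.1 : ℂ))‖ :=
        norm_sub_le _ _
      _ = B t t / 2 + m * a := by
        rw [Complex.norm_real, norm_mul, Complex.norm_I, one_mul, norm_mul,
          Complex.norm_real, Complex.norm_real, Real.norm_eq_abs, Real.norm_eq_abs,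
          Real.norm_eq_abs, abs_of_pos hm, abs_of_nonneg (by linarith : (0:ℝ) ≤ B t t / 2)]
  have hlow : ‖M‖ - ‖r‖ ≤ ‖1 - lam t‖ := by
    rw [hdecomp]
    exact norm_sub_norm_le _ _
  have hup : ‖1 - lam t‖ ≤ ‖M‖ + ‖r‖ := by
    rw [hdecomp]
    exact norm_sub_le _ _
  constructor
  · -- lower bound
    have h1 : min (m/2) (c/8) * ‖w t‖ ≤ min (m/2) (c/8) * (a + b^2) :=
      mul_le_mul_of_nonneg_left hw_up hα0.le
    have h2 : min (m/2) (c/8) * a ≤ m/2 * a :=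
      mul_le_mul_of_nonneg_right (min_le_left _ _) ha0
    have h3 : min (m/2) (c/8) * b^2 ≤ c/8 * b^2 :=
      mul_le_mul_of_nonneg_right (min_le_right _ _) (by positivity)
    have h5 : c/8 * b^2 ≤ c/8 * ‖t‖^2 := mul_le_mul_of_nonneg_left hbt2 (by linarith)
    linarith
  · -- upper bound
    have h7 : ‖B‖/2 * ‖t‖^2 ≤ ‖B‖/2 * (a + b^2) :=
      mul_le_mul_of_nonneg_left hts (by positivity)
    have h8 : c/8 * ‖t‖^2 ≤ c/8 * (a + b^2) :=
      mul_le_mul_of_nonneg_left hts (by linarith)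
    have h9 : a + b^2 ≤ 2 * ‖w t‖ := by linarith
    have h10 : (m + ‖B‖/2 + c/8) * (a + b^2) ≤ (m + ‖B‖/2 + c/8) * (2 * ‖w t‖) :=
      mul_le_mul_of_nonneg_left h9 (by positivity)
    have h11 : (0:ℝ) ≤ m * b^2 := by positivity
    linarith
end
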